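/- For every n ≥ 1, the set of sporadic matrices in S^n_+(ℤ) decomposes into finitely many orbits under the action X ↦ U X Uᵀ of GL(n,ℤ); equivalently, there is a finite set R of sporadic matrices in S^n_+(ℤ) such that every sporadic X ∈ S^n_+(ℤ) is unimodularly equivalent to some element of R. -/

import Mathlib

open Matrix BigOperators Finset

section Helpers
variable {R : Type*} [CommRing R]

lemma dot_expand {n : ℕ} (M : Matrix (Fin n) (Fin n) R) (x y : Fin n → R) :
    x ⬝ᵥ M *ᵥ y = ∑ i, ∑ j, x i * M i j * y j := by
  simp [dotProduct, mulVec, Finset.mul_sum, mul_assoc]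

lemma conj_entry {n m : ℕ} (A : Matrix (Fin m) (Fin n) R) (M : Matrix (Fin n) (Fin n) R)
    (i j : Fin m) : (A * M * Aᵀ) i j = (A i) ⬝ᵥ M *ᵥ (A j) := by
  rw [dot_expand]
  simp only [mul_apply, transpose_apply, Finset.sum_mul]
  rw [Finset.sum_comm]

lemma single_bilin {n : ℕ} (M : Matrix (Fin n) (Fin n) R) (a b : R) (i j : Fin n) :
    (Pi.single i a) ⬝ᵥ M *ᵥ (Pi.single j b) = a * M i j * b := by
  rw [dot_expand]
  rw [Finset.sum_eq_single i]
  · rw [Finset.sum_eq_single j]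
    · simp
    · intro k _ hk; simp [Pi.single_eq_of_ne hk]
    · intro h; exact absurd (Finset.mem_univ j) h
  · intro k _ hk; simp [Pi.single_eq_of_ne hk]
  · intro h; exact absurd (Finset.mem_univ i) h

lemma cons_bilin {n : ℕ} (Y : Matrix (Fin (n+1)) (Fin (n+1)) R) (s t : R) (x y : Fin n → R) :
    (Fin.cons s x) ⬝ᵥ Y *ᵥ (Fin.cons t y) =
      s * t * Y 0 0 + s * (∑ j, Y 0 j.succ * y j) + t * (∑ i, Y i.succ 0 * x i)
        + x ⬝ᵥ (Y.submatrix Fin.succ Fin.succ) *ᵥ y := by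
  rw [dot_expand, dot_expand]
  simp only [Fin.sum_univ_succ, Fin.cons_zero, Fin.cons_succ, submatrix_apply]
  rw [Finset.sum_add_distrib, Finset.mul_sum, Finset.mul_sum]
  rw [show ∑ i, x i * Y i.succ 0 * t = ∑ i, t * (Y i.succ 0 * x i) from
    Finset.sum_congr rfl fun i _ => by ring]
  rw [show (∑ j, s * Y 0 j.succ * y j) = ∑ j, s * (Y 0 j.succ * y j) from
    Finset.sum_congr rfl fun j _ => by ring]
  ring

lemma cons_quad {n : ℕ} (Y : Matrix (Fin (n+1)) (Fin (n+1)) R) (hY : Yᵀ = Y) (t : R)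
    (x : Fin n → R) :
    (Fin.cons t x) ⬝ᵥ Y *ᵥ (Fin.cons t x) =
      Y 0 0 * t^2 + 2 * t * (∑ j, Y 0 j.succ * x j)
        + x ⬝ᵥ (Y.submatrix Fin.succ Fin.succ) *ᵥ x := by
  rw [cons_bilin]
  rw [show ∑ i, Y i.succ 0 * x i = ∑ i, Y 0 i.succ * x i from
    Finset.sum_congr rfl fun i _ => by conv_lhs => rw [← hY, transpose_apply]]
  ring

lemma add_quad {n : ℕ} (M : Matrix (Fin n) (Fin n) R) (y x : Fin n → R) (t : R) :
    (y + t • x) ⬝ᵥ M *ᵥ (y + t • x) =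
      y ⬝ᵥ M *ᵥ y + t * (y ⬝ᵥ M *ᵥ x) + t * (x ⬝ᵥ M *ᵥ y) + t^2 * (x ⬝ᵥ M *ᵥ x) := by
  simp only [mulVec_add, mulVec_smul, dotProduct_add, add_dotProduct, smul_dotProduct,
    dotProduct_smul, smul_eq_mul]
  ring

lemma conj_vecMulVec {n m : ℕ} (U : Matrix (Fin m) (Fin n) R) (x : Fin n → R) :
    U * vecMulVec x x * Uᵀ = vecMulVec (U *ᵥ x) (U *ᵥ x) := by
  ext i j
  rw [conj_entry, dot_expand]
  simp only [vecMulVec_apply, mulVec, dotProduct]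
  rw [Finset.sum_mul_sum]
  exact Finset.sum_congr rfl fun k _ => Finset.sum_congr rfl fun l _ => by ring

lemma cons_ne_zero_of_tail {n : ℕ} {x : Fin n → R} (t : R) (hx : x ≠ 0) :
    Fin.cons t x ≠ (0 : Fin (n+1) → R) := by
  intro h
  apply hx
  funext i
  have := congrFun h i.succ
  simpa using this

/-- smul of the quadratic form -/
lemma smul_quad {n : ℕ} (M : Matrix (Fin n) (Fin n) R) (g : R) (x : Fin n → R) :
    (g • x) ⬝ᵥ M *ᵥ (g • x) = g^2 * (x ⬝ᵥ M *ᵥ x) := by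
  rw [smul_dotProduct, mulVec_smul, dotProduct_smul]
  simp [smul_eq_mul]; ring

end Helpers

/-- The equivalence `Fin 1 ⊕ Fin n ≃ Fin (n+1)`. -/
def finSumOne (n : ℕ) : Fin 1 ⊕ Fin n ≃ Fin (n+1) where
  toFun := Sum.elim (fun _ => 0) Fin.succ
  invFun := fun i => Fin.cases (Sum.inl 0) Sum.inr i
  left_inv := by rintro (x | i); · simp [Subsingleton.elim (0 : Fin 1) x]
                 · simp
  right_inv := by intro i; induction i using Fin.cases <;> simp

section BlockL
variable {R : Type*} [CommRing R]

/-- Lower block triangular matrix `[[t, 0], [s, V]]`. -/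
def blockL {n : ℕ} (t : R) (s : Fin n → R) (V : Matrix (Fin n) (Fin n) R) :
    Matrix (Fin (n+1)) (Fin (n+1)) R :=
  Matrix.of (Fin.cons (Fin.cons t (0 : Fin n → R)) (fun i' => Fin.cons (s i') (V i')) :
    Fin (n+1) → Fin (n+1) → R)

@[simp] lemma blockL_row_zero {n : ℕ} (t : R) (s : Fin n → R) (V : Matrix (Fin n) (Fin n) R) :
    blockL t s V 0 = Fin.cons t (0 : Fin n → R) := rfl

@[simp] lemma blockL_row_succ {n : ℕ} (t : R) (s : Fin n → R) (V : Matrix (Fin n) (Fin n) R)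
    (i : Fin n) : blockL t s V i.succ = Fin.cons (s i) (V i) := by
  show ((Fin.cons (Fin.cons t (0 : Fin n → R)) (fun i' => Fin.cons (s i') (V i')) :
    Fin (n+1) → Fin (n+1) → R) i.succ) = _
  rw [Fin.cons_succ]

lemma blockL_det {n : ℕ} (t : R) (s : Fin n → R) (V : Matrix (Fin n) (Fin n) R) :
    (blockL t s V).det = t * V.det := by
  classical
  have hsub : (blockL t s V).submatrix (finSumOne n) (finSumOne n) =
      fromBlocks (Matrix.of fun _ _ => t) 0 (Matrix.of fun i _ => s i) V := by
    ext (i | i) (j | j) <;>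
      simp [finSumOne, fromBlocks, Fin.cons_zero, Fin.cons_succ]
  have h1 : ((blockL t s V).submatrix (finSumOne n) (finSumOne n)).det = (blockL t s V).det :=
    Matrix.det_submatrix_equiv_self _ _
  rw [hsub, Matrix.det_fromBlocks_zero₁₂] at h1
  rw [← h1, Matrix.det_fin_one]
  rfl

lemma blockL_map {S : Type*} [CommRing S] (f : R →+* S) {n : ℕ} (t : R) (s : Fin n → R)
    (V : Matrix (Fin n) (Fin n) R) :
    (blockL t s V).map f = blockL (f t) (fun i => f (s i)) (V.map f) := by
  ext i j
  induction i using Fin.cases <;> induction j using Fin.cases <;>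
    simp [Matrix.map_apply, blockL_row_zero, blockL_row_succ, Fin.cons_zero, Fin.cons_succ,
      Pi.zero_apply]

end BlockL

section Field
variable {K : Type*} [Field K] [LinearOrder K] [IsStrictOrderedRing K]

/-- Schur complement w.r.t. the (0,0) entry. -/
def schurC {n : ℕ} (Y : Matrix (Fin (n+1)) (Fin (n+1)) K) : Matrix (Fin n) (Fin n) K :=
  Matrix.of fun i j => Y i.succ j.succ - Y 0 i.succ * Y 0 j.succ / Y 0 0

lemma schurC_apply {n : ℕ} (Y : Matrix (Fin (n+1)) (Fin (n+1)) K) (i j : Fin n) :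
    schurC Y i j = Y i.succ j.succ - Y 0 i.succ * Y 0 j.succ / Y 0 0 := rfl

lemma schurC_transpose {n : ℕ} (Y : Matrix (Fin (n+1)) (Fin (n+1)) K) (hY : Yᵀ = Y) :
    (schurC Y)ᵀ = schurC Y := by
  ext i j
  simp only [transpose_apply, schurC_apply]
  rw [show Y j.succ i.succ = Y i.succ j.succ from by conv_lhs => rw [← hY, transpose_apply]]
  ring

lemma schurC_quad {n : ℕ} (Y : Matrix (Fin (n+1)) (Fin (n+1)) K) (x : Fin n → K) :
    x ⬝ᵥ schurC Y *ᵥ x =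
      x ⬝ᵥ (Y.submatrix Fin.succ Fin.succ) *ᵥ x - (∑ j, Y 0 j.succ * x j)^2 / Y 0 0 := by
  rw [dot_expand, dot_expand]
  rw [sq, Finset.sum_mul_sum, Finset.sum_div, ← Finset.sum_sub_distrib]
  refine Finset.sum_congr rfl fun i _ => ?_
  rw [Finset.sum_div, ← Finset.sum_sub_distrib]
  refine Finset.sum_congr rfl fun j _ => ?_
  rw [schurC_apply, submatrix_apply]
  ring

lemma det_schurC {n : ℕ} (Y : Matrix (Fin (n+1)) (Fin (n+1)) K) (hY : Yᵀ = Y)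
    (hm : Y 0 0 ≠ 0) : (schurC Y).det = Y.det / Y 0 0 := by
  classical
  set A : Matrix (Fin 1) (Fin 1) K := Matrix.of fun _ _ => Y 0 0 with hA
  set B : Matrix (Fin 1) (Fin n) K := Matrix.of fun _ j => Y 0 j.succ with hB
  set C : Matrix (Fin n) (Fin 1) K := Matrix.of fun i _ => Y i.succ 0 with hC
  set D : Matrix (Fin n) (Fin n) K := Y.submatrix Fin.succ Fin.succ with hD
  have hsub : Y.submatrix (finSumOne n) (finSumOne n) = fromBlocks A B C D := by
    ext (i | i) (j | j) <;> simp [finSumOne, fromBlocks, hA, hB, hC, hD]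
  have hdetY : (fromBlocks A B C D).det = Y.det := by
    rw [← hsub, Matrix.det_submatrix_equiv_self]
  haveI : Invertible A := by
    apply Matrix.invertibleOfIsUnitDet
    rw [Matrix.det_fin_one]
    exact isUnit_iff_ne_zero.mpr hm
  have hinvA : (⅟A : Matrix (Fin 1) (Fin 1) K) 0 0 = (Y 0 0)⁻¹ := by
    have h1 := mul_invOf_self A
    have h2 : (A * ⅟A) 0 0 = Y 0 0 * (⅟A) 0 0 := by
      rw [mul_apply, Fin.sum_univ_one]; rfl
    rw [h1] at h2
    have h3 : (1 : Matrix (Fin 1) (Fin 1) K) 0 0 = 1 := by simp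
    rw [h3] at h2
    exact (inv_eq_of_mul_eq_one_right h2.symm).symm
  have hfb := Matrix.det_fromBlocks₁₁ A B C D
  have hschur : D - C * ⅟A * B = schurC Y := by
    ext i j
    simp only [Matrix.sub_apply, mul_apply, Fin.sum_univ_one, hinvA, schurC_apply, hB, hC, hD,
      submatrix_apply, Matrix.of_apply]
    rw [show Y i.succ 0 = Y 0 i.succ from by conv_lhs => rw [← hY, transpose_apply]]
    ring
  rw [hschur, hdetY, Matrix.det_fin_one] at hfb
  rw [eq_div_iff hm, hfb]
  have hA00 : A 0 0 = Y 0 0 := rfl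
  rw [hA00]
  ring

/-- Positive definiteness via the quadratic form over an ordered field. -/
def PosDefQ {n : ℕ} (Q : Matrix (Fin n) (Fin n) K) : Prop :=
  ∀ x : Fin n → K, x ≠ 0 → 0 < x ⬝ᵥ Q *ᵥ x

lemma single_ne_zero' {n : ℕ} (i : Fin n) : (Pi.single i 1 : Fin n → K) ≠ 0 := by
  intro h
  have := congrFun h i
  simp at this

lemma posdef_diag {n : ℕ} {Q : Matrix (Fin n) (Fin n) K} (hQ : PosDefQ Q) (i : Fin n) :
    0 < Q i i := by
  have h := hQ (Pi.single i 1) (single_ne_zero' i)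
  rw [single_bilin] at h
  simpa using h

lemma schurC_posdef {n : ℕ} {Y : Matrix (Fin (n+1)) (Fin (n+1)) K} (hY : Yᵀ = Y)
    (hpos : PosDefQ Y) : PosDefQ (schurC Y) := by
  intro x hx
  have hm : 0 < Y 0 0 := posdef_diag hpos 0
  set c : K := ∑ j, Y 0 j.succ * x j with hc
  have h := hpos (Fin.cons (-(c / Y 0 0)) x) (cons_ne_zero_of_tail _ hx)
  rw [cons_quad Y hY] at h
  rw [schurC_quad]
  rw [← hc] at h ⊢
  have : Y 0 0 * (-(c / Y 0 0))^2 + 2 * (-(c / Y 0 0)) * c = - (c^2 / Y 0 0) := by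
    field_simp
    ring
  nlinarith [h, this]

lemma posdef_det_pos : ∀ {n : ℕ} (Q : Matrix (Fin n) (Fin n) K), Qᵀ = Q → PosDefQ Q →
    0 < Q.det := by
  intro n
  induction n with
  | zero => intro Q _ _; simp [Matrix.det_fin_zero]
  | succ n ih =>
    intro Q hsym hpos
    have hm : 0 < Q 0 0 := posdef_diag hpos 0
    have hds := det_schurC Q hsym (ne_of_gt hm)
    have hdz : 0 < (schurC Q).det := ih (schurC Q) (schurC_transpose Q hsym)
      (schurC_posdef hsym hpos)
    rw [hds] at hdz
    exact (div_pos_iff.mp hdz).elim (fun h => h.1) (fun h => absurd h.2 (not_lt.mpr hm.le))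

/-- congruence by an invertible matrix preserves quadratic positivity -/
lemma mulVec_ne_zero {n : ℕ} {B : Matrix (Fin n) (Fin n) K} (hB : B.det ≠ 0)
    {x : Fin n → K} (hx : x ≠ 0) : B *ᵥ x ≠ 0 := by
  haveI : Invertible B := B.invertibleOfIsUnitDet (isUnit_iff_ne_zero.mpr hB)
  intro h
  apply hx
  calc x = (⅟B * B) *ᵥ x := by rw [invOf_mul_self, Matrix.one_mulVec]
  _ = ⅟B *ᵥ (B *ᵥ x) := by rw [Matrix.mulVec_mulVec]
  _ = 0 := by rw [h, Matrix.mulVec_zero]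

lemma conj_quad_eq {n m : ℕ} (B : Matrix (Fin m) (Fin n) K) (Q : Matrix (Fin n) (Fin n) K)
    (x : Fin m → K) : x ⬝ᵥ (B * Q * Bᵀ) *ᵥ x = (Bᵀ *ᵥ x) ⬝ᵥ Q *ᵥ (Bᵀ *ᵥ x) := by
  rw [← Matrix.mulVec_mulVec, ← Matrix.mulVec_mulVec, Matrix.dotProduct_mulVec,
    Matrix.mulVec_transpose]

lemma posdef_conj {n : ℕ} {Q : Matrix (Fin n) (Fin n) K} (hpos : PosDefQ Q)
    {B : Matrix (Fin n) (Fin n) K} (hB : B.det ≠ 0) : PosDefQ (B * Q * Bᵀ) := by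
  intro x hx
  rw [conj_quad_eq]
  apply hpos
  apply mulVec_ne_zero _ hx
  rw [Matrix.det_transpose]; exact hB

lemma posdef_inv {n : ℕ} {Q : Matrix (Fin n) (Fin n) K} (hsym : Qᵀ = Q) (hpos : PosDefQ Q) :
    (Q⁻¹)ᵀ = Q⁻¹ ∧ PosDefQ Q⁻¹ := by
  have hdet : Q.det ≠ 0 := ne_of_gt (posdef_det_pos Q hsym hpos)
  have hu : IsUnit Q.det := isUnit_iff_ne_zero.mpr hdet
  constructor
  · rw [Matrix.transpose_nonsing_inv, hsym]
  · intro x hx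
    have hu0 : Q *ᵥ (Q⁻¹ *ᵥ x) = x := by
      rw [Matrix.mulVec_mulVec, Matrix.mul_nonsing_inv Q hu, Matrix.one_mulVec]
    have hne : Q⁻¹ *ᵥ x ≠ 0 := by
      intro h; apply hx; rw [← hu0, h, Matrix.mulVec_zero]
    calc (0:K) < (Q⁻¹ *ᵥ x) ⬝ᵥ Q *ᵥ (Q⁻¹ *ᵥ x) := hpos _ hne
    _ = (Q *ᵥ (Q⁻¹ *ᵥ x)) ⬝ᵥ (Q⁻¹ *ᵥ x) := by
        rw [Matrix.dotProduct_mulVec, ← Matrix.mulVec_transpose, hsym]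
    _ = x ⬝ᵥ Q⁻¹ *ᵥ x := by rw [hu0]

end Field

section Cast
variable {K : Type*} [Field K]

lemma cast_dot (f : ℚ →+* K) {n : ℕ} (M : Matrix (Fin n) (Fin n) ℚ) (x y : Fin n → ℚ) :
    (fun i => f (x i)) ⬝ᵥ (M.map f) *ᵥ (fun i => f (y i)) = f (x ⬝ᵥ M *ᵥ y) := by
  rw [dot_expand, dot_expand, map_sum]
  refine Finset.sum_congr rfl fun i _ => ?_
  rw [map_sum]
  refine Finset.sum_congr rfl fun j _ => ?_
  simp [Matrix.map_apply, _root_.map_mul]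

lemma cast_dot_int (f : ℤ →+* K) {n : ℕ} (M : Matrix (Fin n) (Fin n) ℤ) (x y : Fin n → ℤ) :
    (fun i => f (x i)) ⬝ᵥ (M.map f) *ᵥ (fun i => f (y i)) = f (x ⬝ᵥ M *ᵥ y) := by
  rw [dot_expand, dot_expand, map_sum]
  refine Finset.sum_congr rfl fun i _ => ?_
  rw [map_sum]
  refine Finset.sum_congr rfl fun j _ => ?_
  simp [Matrix.map_apply, _root_.map_mul]

lemma cast_mulVec (f : ℤ →+* K) {n m : ℕ} (M : Matrix (Fin m) (Fin n) ℤ) (x : Fin n → ℤ) :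
    (M.map f) *ᵥ (fun i => f (x i)) = fun i => f ((M *ᵥ x) i) := by
  funext i
  rw [RingHom.map_mulVec]
  rfl

lemma castvec_eq_zero {n : ℕ} {x : Fin n → ℤ} (f : ℤ →+* K) [CharZero K]
    (h : (fun i => f (x i)) = 0) : x = 0 := by
  funext i
  have h2 := congrFun h i
  simp only [Pi.zero_apply] at h2
  rw [eq_intCast f] at h2
  exact_mod_cast h2

end Cast

section MinVec

/-- val of an integer vector in a rational matrix -/
def qval {n : ℕ} (Q : Matrix (Fin n) (Fin n) ℚ) (x : Fin n → ℤ) : ℚ :=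
  (fun i => (x i : ℚ)) ⬝ᵥ Q *ᵥ (fun i => (x i : ℚ))

lemma qval_pos {n : ℕ} {Q : Matrix (Fin n) (Fin n) ℚ} (hpos : PosDefQ Q) {x : Fin n → ℤ}
    (hx : x ≠ 0) : 0 < qval Q x := by
  apply hpos
  intro h
  exact hx (castvec_eq_zero (Int.castRingHom ℚ) h)

lemma exists_min_vec {n : ℕ} (Q : Matrix (Fin (n+1)) (Fin (n+1)) ℚ) (hpos : PosDefQ Q) :
    ∃ v : Fin (n+1) → ℤ, v ≠ 0 ∧ ∀ x : Fin (n+1) → ℤ, x ≠ 0 → qval Q v ≤ qval Q x := by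
  classical
  set d : ℕ := ∏ i, ∏ j, (Q i j).den with hd
  have hdpos : 0 < d := by
    apply Finset.prod_pos; intro i _; apply Finset.prod_pos; intro j _; exact (Q i j).pos
  have hz : ∀ i j, ∃ z : ℤ, (z:ℚ) = Q i j * d := by
    intro i j
    have h1 : (Q i j).den ∣ ∏ j', (Q i j').den := Finset.dvd_prod_of_mem _ (Finset.mem_univ j)
    have h2 : (∏ j', (Q i j').den) ∣ d := Finset.dvd_prod_of_mem _ (Finset.mem_univ i)
    obtain ⟨k, hk⟩ := (Int.natCast_dvd_natCast.mpr (h1.trans h2) : ((Q i j).den : ℤ) ∣ (d:ℤ))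
    refine ⟨(Q i j).num * k, ?_⟩
    have hk' : (d:ℚ) = ((Q i j).den:ℚ) * (k:ℚ) := by exact_mod_cast hk
    push_cast
    rw [hk', ← mul_assoc, Rat.mul_den_eq_num]
  choose Z hZ using hz
  have hint : ∀ x : Fin (n+1) → ℤ, ((∑ i, ∑ j, x i * x j * Z i j : ℤ) : ℚ)
      = d * qval Q x := by
    intro x
    rw [qval, dot_expand]
    push_cast
    rw [Finset.mul_sum]
    refine Finset.sum_congr rfl fun i _ => ?_
    rw [Finset.mul_sum]
    refine Finset.sum_congr rfl fun j _ => ?_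
    rw [hZ i j]
    ring
  set N : (Fin (n+1) → ℤ) → ℤ := fun x => ∑ i, ∑ j, x i * x j * Z i j with hN
  have hNpos : ∀ x, x ≠ 0 → 0 < N x := by
    intro x hx
    have h1 : (0:ℚ) < d * qval Q x := by
      apply mul_pos _ (qval_pos hpos hx)
      exact_mod_cast hdpos
    rw [← hint x] at h1
    exact_mod_cast h1
  set P : ℕ → Prop := fun k => ∃ x : Fin (n+1) → ℤ, x ≠ 0 ∧ N x = k with hP
  have hPex : ∃ k, P k := by
    refine ⟨(N (Pi.single 0 1)).toNat, Pi.single 0 1, ?_, ?_⟩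
    · intro h
      have := congrFun h 0
      simp at this
    · rw [Int.toNat_of_nonneg]
      exact le_of_lt (hNpos _ (by intro h; have := congrFun h 0; simp at this))
  obtain ⟨v, hv0, hvk⟩ := Nat.find_spec hPex
  refine ⟨v, hv0, ?_⟩
  intro x hx
  have hle : N v ≤ N x := by
    have h2 : P (N x).toNat := ⟨x, hx, (Int.toNat_of_nonneg (le_of_lt (hNpos x hx))).symm ▸ rfl⟩
    have h3 := Nat.find_min' hPex h2
    have h4 : N v = (Nat.find hPex : ℤ) := hvk ▸ rfl
    rw [h4]
    calc (Nat.find hPex : ℤ) ≤ ((N x).toNat : ℤ) := by exact_mod_cast h3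
    _ = N x := Int.toNat_of_nonneg (le_of_lt (hNpos x hx))
  have h5 : (d:ℚ) * qval Q v ≤ d * qval Q x := by
    rw [← hint v, ← hint x]
    exact_mod_cast hle
  have hd0 : (0:ℚ) < d := by exact_mod_cast hdpos
  exact le_of_mul_le_mul_left h5 hd0

end MinVec

/-- Every nonzero integer vector is an integer multiple of the first row of a
unimodular matrix. -/
lemma exists_basis_row {n : ℕ} (v : Fin (n+1) → ℤ) (hv : v ≠ 0) :
    ∃ (g : ℤ) (w : Fin (n+1) → ℤ) (A : Matrix (Fin (n+1)) (Fin (n+1)) ℤ),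
      IsUnit A.det ∧ A 0 = w ∧ v = g • w ∧ g ≠ 0 := by
  classical
  set b₀ : Module.Basis (Fin (n+1)) ℤ (Fin (n+1) → ℤ) := Pi.basisFun ℤ (Fin (n+1))
  set N : Submodule ℤ (Fin (n+1) → ℤ) := Submodule.span ℤ {v} with hN
  obtain ⟨m, snf⟩ := N.smithNormalForm b₀
  -- N has rank 1
  have hNrank : m = 1 := by
    have hinj : Function.Injective (LinearMap.toSpanSingleton ℤ (Fin (n+1) → ℤ) v) := by
      rw [← LinearMap.ker_eq_bot]
      exact LinearMap.ker_toSpanSingleton ℤ hv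
    let e0 : ℤ ≃ₗ[ℤ] LinearMap.range (LinearMap.toSpanSingleton ℤ (Fin (n+1) → ℤ) v) :=
      LinearEquiv.ofInjective _ hinj
    let e1 : ℤ ≃ₗ[ℤ] N := e0.trans (LinearEquiv.ofEq _ _
      (LinearMap.span_singleton_eq_range ℤ (Fin (n+1) → ℤ) v).symm)
    let bN' : Module.Basis (Fin 1) ℤ N := (Module.Basis.singleton (Fin 1) ℤ).map e1
    have := Fintype.card_congr (snf.bN.indexEquiv bN')
    simpa using this
  subst hNrank
  -- express v in terms of the basis of N
  have hvN : v ∈ N := Submodule.mem_span_singleton_self v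
  set u : N := ⟨v, hvN⟩ with hu
  have hrepr : (snf.bN.repr u 0) • (snf.bN 0) = u := by
    have := snf.bN.sum_repr u
    rwa [Fin.sum_univ_one] at this
  set c : ℤ := snf.bN.repr u 0 with hc
  have hv_eq : v = c • ((snf.bN 0 : Fin (n+1) → ℤ)) := by
    have := congrArg (Subtype.val) hrepr
    simpa using this.symm
  have hsnf := snf.snf 0
  set w : Fin (n+1) → ℤ := snf.bM (snf.f 0) with hw
  have hv_eq2 : v = (c * snf.a 0) • w := by
    rw [hv_eq, hsnf, smul_smul]
  have hg : c * snf.a 0 ≠ 0 := by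
    intro h
    apply hv
    rw [hv_eq2, h, zero_smul]
  -- build the unimodular matrix
  set σ : Equiv.Perm (Fin (n+1)) := Equiv.swap 0 (snf.f 0) with hσ
  set bM' : Module.Basis (Fin (n+1)) ℤ (Fin (n+1) → ℤ) := snf.bM.reindex σ with hbM'
  set A : Matrix (Fin (n+1)) (Fin (n+1)) ℤ := (b₀.toMatrix ⇑bM')ᵀ with hA2
  have hdet : IsUnit A.det := by
    have hmul := Module.Basis.toMatrix_mul_toMatrix_flip b₀ bM'
    have : (b₀.toMatrix ⇑bM').det * (bM'.toMatrix ⇑b₀).det = 1 := by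
      rw [← Matrix.det_mul, hmul, Matrix.det_one]
    rw [Matrix.det_transpose]
    exact IsUnit.of_mul_eq_one _ this
  refine ⟨c * snf.a 0, w, A, hdet, ?_, hv_eq2, hg⟩
  funext j
  have : A 0 j = (bM' 0) j := by
    rw [hA2, Matrix.transpose_apply, Module.Basis.toMatrix_apply, Pi.basisFun_repr]
  rw [this, hbM', Module.Basis.reindex_apply]
  have : σ.symm 0 = snf.f 0 := by
    rw [hσ, Equiv.symm_swap, Equiv.swap_apply_left]
  rw [this]

section IntHelpers

lemma map_det_int {k : ℕ} (A : Matrix (Fin k) (Fin k) ℤ) :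
    (A.map (Int.cast : ℤ → ℚ)).det = (A.det : ℚ) := by
  have := (RingHom.map_det (Int.castRingHom ℚ) A).symm
  rwa [RingHom.mapMatrix_apply, Int.coe_castRingHom] at this

lemma map_det_ne_zero {k : ℕ} {A : Matrix (Fin k) (Fin k) ℤ} (h : IsUnit A.det) :
    (A.map (Int.cast : ℤ → ℚ)).det ≠ 0 := by
  rw [map_det_int]
  exact_mod_cast h.ne_zero

lemma map_mul_int {k l m : ℕ} (P : Matrix (Fin k) (Fin l) ℤ) (Q : Matrix (Fin l) (Fin m) ℤ) :
    (P * Q).map (Int.cast : ℤ → ℚ) = P.map (Int.cast : ℤ → ℚ) * Q.map (Int.cast : ℤ → ℚ) := by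
  have := Matrix.map_mul (L := P) (M := Q) (f := Int.castRingHom ℚ)
  rwa [Int.coe_castRingHom] at this

lemma int_mulVec_ne_zero {k : ℕ} {B : Matrix (Fin k) (Fin k) ℤ} (hB : IsUnit B.det)
    {x : Fin k → ℤ} (hx : x ≠ 0) : B *ᵥ x ≠ 0 := by
  haveI : Invertible B := B.invertibleOfIsUnitDet hB
  intro h
  apply hx
  calc x = (⅟B * B) *ᵥ x := by rw [invOf_mul_self, Matrix.one_mulVec]
  _ = ⅟B *ᵥ (B *ᵥ x) := by rw [Matrix.mulVec_mulVec]
  _ = 0 := by rw [h, Matrix.mulVec_zero]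

lemma cast_mulVec_int {k l : ℕ} (M : Matrix (Fin k) (Fin l) ℤ) (x : Fin l → ℤ) :
    (M.map (Int.cast : ℤ → ℚ)) *ᵥ (fun i => (x i : ℚ)) = fun i => (((M *ᵥ x) i : ℤ) : ℚ) :=
  cast_mulVec (Int.castRingHom ℚ) M x

lemma castvec_cons {k : ℕ} (a : ℤ) (x : Fin k → ℤ) :
    (fun i => ((Fin.cons a x : Fin (k+1) → ℤ) i : ℚ)) =
      Fin.cons (a : ℚ) (fun i => (x i : ℚ)) := by
  funext i
  induction i using Fin.cases <;> simp

lemma row_ne_zero_of_unit {k : ℕ} {V : Matrix (Fin k) (Fin k) ℤ} (hV : IsUnit V.det)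
    (i : Fin k) : V i ≠ 0 := by
  intro h
  have h2 : (V.map (Int.cast : ℤ → ℚ)) i = 0 := by
    funext j; simp [Matrix.map_apply, congrFun h j]
  exact map_det_ne_zero hV (Matrix.det_eq_zero_of_row_eq_zero i (fun j => congrFun h2 j))

end IntHelpers

/-- **Reduction theory**: every positive definite rational matrix is integrally congruent
to one whose diagonal product is bounded by `4^(n^2)` times its determinant. -/
theorem reduction : ∀ (n : ℕ) (Q : Matrix (Fin n) (Fin n) ℚ), Qᵀ = Q → PosDefQ Q →
    ∃ U : Matrix (Fin n) (Fin n) ℤ, IsUnit U.det ∧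
      ∏ i, (U.map (Int.cast : ℤ → ℚ) * Q * (U.map (Int.cast : ℤ → ℚ))ᵀ) i i
        ≤ 4^(n^2) * Q.det := by
  intro n
  induction n with
  | zero =>
    intro Q _ _
    exact ⟨1, by simp, by simp [Matrix.det_fin_zero]⟩
  | succ n ih =>
    intro Q hsym hpos
    obtain ⟨v, hv0, hvmin⟩ := exists_min_vec Q hpos
    obtain ⟨g, w, A, hAdet, hA0, hvgw, hg0⟩ := exists_basis_row v hv0
    have hw0 : w ≠ 0 := by
      rintro rfl
      rw [smul_zero] at hvgw
      exact hv0 hvgw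
    -- w is also a minimizer
    have hcastv : (fun i => (v i : ℚ)) = (g:ℚ) • (fun i => (w i : ℚ)) := by
      funext i; rw [hvgw]; push_cast; simp
    have hvw : qval Q v = (g:ℚ)^2 * qval Q w := by
      rw [qval, hcastv, smul_quad, qval]
    have hg1 : (1:ℚ) ≤ (g:ℚ)^2 := by
      have h1 : (1:ℤ) ≤ |g| := Int.one_le_abs hg0
      have h2 : (1:ℚ) ≤ |(g:ℚ)| := by exact_mod_cast h1
      nlinarith [sq_abs (g:ℚ)]
    have hwmin : ∀ x : Fin (n+1) → ℤ, x ≠ 0 → qval Q w ≤ qval Q x := by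
      intro x hx
      have h1 : qval Q w ≤ qval Q v := by
        rw [hvw]
        exact le_mul_of_one_le_left (le_of_lt (qval_pos hpos hw0)) hg1
      exact h1.trans (hvmin x hx)
    -- the congruent matrix Y with minimal corner
    set cA : Matrix (Fin (n+1)) (Fin (n+1)) ℚ := A.map (Int.cast : ℤ → ℚ) with hcA
    have hcAdet : cA.det ≠ 0 := map_det_ne_zero hAdet
    set Y : Matrix (Fin (n+1)) (Fin (n+1)) ℚ := cA * Q * cAᵀ with hY
    have hYsym : Yᵀ = Y := by
      rw [hY, Matrix.transpose_mul, Matrix.transpose_mul, Matrix.transpose_transpose, hsym,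
        Matrix.mul_assoc]
    have hYpos : PosDefQ Y := posdef_conj hpos hcAdet
    have hqvalY : ∀ x : Fin (n+1) → ℤ, qval Y x = qval Q (Aᵀ *ᵥ x) := by
      intro x
      rw [qval, hY, conj_quad_eq, qval]
      have h1 : cAᵀ *ᵥ (fun i => (x i : ℚ)) = fun i => (((Aᵀ *ᵥ x) i : ℤ) : ℚ) := by
        rw [hcA, ← Matrix.transpose_map]
        exact cast_mulVec_int Aᵀ x
      rw [h1]
    have hY00 : Y 0 0 = qval Q w := by
      rw [hY, conj_entry]
      have h1 : cA 0 = fun i => (w i : ℚ) := by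
        funext j; rw [hcA, ← hA0]; rfl
      rw [h1, qval]
    set m : ℚ := Y 0 0 with hm_def
    have hm : 0 < m := posdef_diag hYpos 0
    have hminY : ∀ x : Fin (n+1) → ℤ, x ≠ 0 → m ≤ qval Y x := by
      intro x hx
      rw [hqvalY, hY00]
      apply hwmin
      apply int_mulVec_ne_zero _ hx
      rw [Matrix.det_transpose]; exact hAdet
    -- Schur complement and induction
    set Z := schurC Y with hZ
    have hZsym := schurC_transpose Y hYsym
    have hZpos := schurC_posdef hYsym hYpos
    have hZdet := det_schurC Y hYsym (ne_of_gt hm)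
    obtain ⟨V, hVdet, hVprod⟩ := ih Z hZsym hZpos
    set cV : Matrix (Fin n) (Fin n) ℚ := V.map (Int.cast : ℤ → ℚ) with hcV
    set P : Matrix (Fin n) (Fin n) ℚ := cV * Z * cVᵀ with hP
    set t : Fin n → ℚ := fun i => ∑ j, Y 0 j.succ * (V i j : ℚ) with ht
    set s : Fin n → ℤ := fun i => -round (t i / m) with hs
    set W : Matrix (Fin (n+1)) (Fin (n+1)) ℤ := blockL 1 s V with hW
    have hWdet : IsUnit W.det := by
      rw [hW, blockL_det, one_mul]; exact hVdet
    refine ⟨W * A, ?_, ?_⟩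
    · rw [Matrix.det_mul]; exact hWdet.mul hAdet
    set cW : Matrix (Fin (n+1)) (Fin (n+1)) ℚ := W.map (Int.cast : ℤ → ℚ) with hcW
    have hcW0 : cW 0 = Fin.cons (1:ℚ) (0 : Fin n → ℚ) := by
      funext j
      show ((W 0 j : ℤ) : ℚ) = _
      rw [hW, blockL_row_zero]
      induction j using Fin.cases <;> simp
    have hcWs : ∀ i : Fin n, cW i.succ = Fin.cons ((s i : ℚ)) (fun j => (V i j : ℚ)) := by
      intro i; funext j
      show ((W i.succ j : ℤ) : ℚ) = _
      rw [hW, blockL_row_succ]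
      induction j using Fin.cases <;> simp
    have hGU : (W * A).map (Int.cast : ℤ → ℚ) * Q * ((W * A).map (Int.cast : ℤ → ℚ))ᵀ
        = cW * Y * cWᵀ := by
      rw [map_mul_int, Matrix.transpose_mul, hY]
      simp only [Matrix.mul_assoc]
      rfl
    rw [hGU]
    have hG00 : (cW * Y * cWᵀ) 0 0 = m := by
      rw [conj_entry, hcW0, cons_quad Y hYsym]
      simp [hm_def]
    have hPii : ∀ i : Fin n, P i i
        = (fun j => (V i j : ℚ)) ⬝ᵥ Z *ᵥ (fun j => (V i j : ℚ)) := by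
      intro i; rw [hP, conj_entry]; rfl
    have hGss : ∀ i : Fin n, (cW * Y * cWᵀ) i.succ i.succ
        = P i i + (m * (s i : ℚ) + t i)^2 / m := by
      intro i
      rw [conj_entry, hcWs i, cons_quad Y hYsym]
      have h1 : ∑ j, Y 0 j.succ * (V i j : ℚ) = t i := by rw [ht]
      have h2 : (fun j => (V i j : ℚ)) ⬝ᵥ (Y.submatrix Fin.succ Fin.succ) *ᵥ
          (fun j => (V i j : ℚ)) = P i i + (t i)^2 / m := by
        have h3 := schurC_quad Y (fun j => (V i j : ℚ))
        rw [← hZ, ← hPii i, h1] at h3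
        rw [← hm_def] at h3
        linarith [h3]
      rw [h1, h2]
      field_simp
      ring
    have hGs_le : ∀ i : Fin n, (cW * Y * cWᵀ) i.succ i.succ ≤ P i i + m / 4 := by
      intro i
      rw [hGss i]
      have hsq : (m * (s i : ℚ) + t i)^2 ≤ m^2 / 4 := by
        set r : ℚ := ((round (t i / m) : ℤ) : ℚ) with hr
        have hδ : |t i / m - r| ≤ 1/2 := abs_sub_round _
        have hcast : ((s i : ℤ) : ℚ) = -r := by rw [hs, hr]; push_cast; ring
        have h4 : m * (s i : ℚ) + t i = m * (t i / m - r) := by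
          rw [hcast]
          field_simp
          ring
        rw [h4]
        have h5 : (t i / m - r)^2 ≤ 1/4 := by
          nlinarith [sq_abs (t i / m - r), hδ, abs_nonneg (t i / m - r)]
        calc (m * (t i / m - r))^2 = m^2 * (t i / m - r)^2 := by ring
        _ ≤ m^2 * (1/4) := by nlinarith [sq_nonneg m]
        _ = m^2/4 := by ring
      have h8 : (m * (s i : ℚ) + t i)^2 / m ≤ (m^2/4)/m := by gcongr
      have h9 : (m^2/4)/m = m/4 := by field_simp
      linarith
    have hGs_ge : ∀ i : Fin n, m ≤ (cW * Y * cWᵀ) i.succ i.succ := by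
      intro i
      have hx0 : (Fin.cons (s i) (V i) : Fin (n+1) → ℤ) ≠ 0 :=
        cons_ne_zero_of_tail (s i) (row_ne_zero_of_unit hVdet i)
      have hq := hminY (Fin.cons (s i) (V i)) hx0
      have heq : qval Y (Fin.cons (s i) (V i)) = (cW * Y * cWᵀ) i.succ i.succ := by
        rw [conj_entry, hcWs i, qval, castvec_cons]
      rwa [heq] at hq
    have hG43 : ∀ i : Fin n, (cW * Y * cWᵀ) i.succ i.succ ≤ (4/3) * P i i := by
      intro i
      have := hGs_le i
      have := hGs_ge i
      linarith
    -- the product estimate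
    have hYdet : Y.det = Q.det := by
      rcases Int.isUnit_iff.mp hAdet with h1 | h1 <;>
        · rw [hY, Matrix.det_mul, Matrix.det_mul, Matrix.det_transpose, hcA, map_det_int, h1]
          push_cast
          ring
    have hQdet : 0 < Q.det := posdef_det_pos Q hsym hpos
    have hPpos : ∀ i : Fin n, 0 < P i i := fun i =>
      posdef_diag (by rw [hP]; exact posdef_conj hZpos (map_det_ne_zero hVdet)) i
    rw [Fin.prod_univ_succ, hG00]
    have hstep1 : ∏ i : Fin n, (cW * Y * cWᵀ) i.succ i.succ ≤ ∏ i : Fin n, ((4/3) * P i i) :=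
      Finset.prod_le_prod (fun i _ => (hm.trans_le (hGs_ge i)).le) (fun i _ => hG43 i)
    have hstep2 : ∏ i : Fin n, ((4/3 : ℚ) * P i i) = (4/3)^n * ∏ i : Fin n, P i i := by
      rw [Finset.prod_mul_distrib, Finset.prod_const]
      simp
    have hZdet2 : Z.det = Q.det / m := by
      rw [hZ, hZdet, hYdet, hm_def]
    have hstep3 : ∏ i : Fin n, P i i ≤ 4^(n^2) * (Q.det / m) := by
      rw [← hZdet2]; exact hVprod
    have hchain : m * ∏ i : Fin n, (cW * Y * cWᵀ) i.succ i.succ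
        ≤ (4/3)^n * 4^(n^2) * Q.det := by
      have h1 : m * ∏ i : Fin n, (cW * Y * cWᵀ) i.succ i.succ
          ≤ m * ((4/3)^n * (4^(n^2) * (Q.det / m))) := by
        apply mul_le_mul_of_nonneg_left _ hm.le
        calc ∏ i : Fin n, (cW * Y * cWᵀ) i.succ i.succ ≤ (4/3)^n * ∏ i : Fin n, P i i := by
              rw [← hstep2]; exact hstep1
        _ ≤ (4/3)^n * (4^(n^2) * (Q.det / m)) := by
              apply mul_le_mul_of_nonneg_left hstep3 (by positivity)
      have h2 : m * ((4/3 : ℚ)^n * (4^(n^2) * (Q.det / m))) = (4/3)^n * 4^(n^2) * Q.det := by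
        field_simp
      linarith
    have hcoef : ((4:ℚ)/3)^n * 4^(n^2) ≤ 4^((n+1)^2) := by
      calc ((4:ℚ)/3)^n * 4^(n^2) ≤ 4^n * 4^(n^2) := by
            apply mul_le_mul_of_nonneg_right _ (by positivity)
            exact pow_le_pow_left₀ (by norm_num) (by norm_num) n
      _ = 4^(n + n^2) := by rw [pow_add]
      _ ≤ 4^((n+1)^2) := by
            apply pow_le_pow_right₀ (by norm_num)
            nlinarith
    calc m * ∏ i : Fin n, (cW * Y * cWᵀ) i.succ i.succ ≤ (4/3)^n * 4^(n^2) * Q.det := hchain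
    _ ≤ 4^((n+1)^2) * Q.det := mul_le_mul_of_nonneg_right hcoef hQdet.le

/-- An integer symmetric matrix regarded as a real matrix is positive semidefinite. -/
def IsIntPSD {n : ℕ} (X : Matrix (Fin n) (Fin n) ℤ) : Prop :=
  (X.map (Int.cast : ℤ → ℝ)).PosSemidef

/-- `X ∈ S^n_+(ℤ)` is sporadic if there is no nonzero `x ∈ ℤⁿ` with `X - x xᵀ` PSD. -/
def IsSporadicPSD {n : ℕ} (X : Matrix (Fin n) (Fin n) ℤ) : Prop :=
  ¬ ∃ x : Fin n → ℤ, x ≠ 0 ∧ IsIntPSD (X - Matrix.vecMulVec x x)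

section RealSide
variable {n : ℕ}

lemma dot_comm_sym {R : Type*} [CommRing R] {k : ℕ} {M : Matrix (Fin k) (Fin k) R}
    (hM : Mᵀ = M) (x y : Fin k → R) : x ⬝ᵥ M *ᵥ y = y ⬝ᵥ M *ᵥ x := by
  rw [dot_expand, dot_expand, Finset.sum_comm]
  refine Finset.sum_congr rfl fun i _ => Finset.sum_congr rfl fun j _ => ?_
  rw [show M j i = M i j from by conv_lhs => rw [← hM, transpose_apply]]
  ring

lemma map_int_eq_comp (X : Matrix (Fin n) (Fin n) ℤ) :
    X.map (Int.cast : ℤ → ℝ) = (X.map (Int.cast : ℤ → ℚ)).map (Rat.cast : ℚ → ℝ) := by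
  ext i j
  simp [Matrix.map_apply]

lemma isHermitian_of_symm {M : Matrix (Fin n) (Fin n) ℝ} (h : Mᵀ = M) : M.IsHermitian := by
  have h2 : Mᴴ = Mᵀ := by ext i j; simp [conjTranspose_apply]
  rw [Matrix.IsHermitian, h2, h]

lemma psd_quad_nonneg {M : Matrix (Fin n) (Fin n) ℝ} (h : M.PosSemidef) (v : Fin n → ℝ) :
    0 ≤ v ⬝ᵥ M *ᵥ v := by
  have := h.dotProduct_mulVec_nonneg v
  simpa using this

lemma intPSD_symm {X : Matrix (Fin n) (Fin n) ℤ} (h : IsIntPSD X) : Xᵀ = X := by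
  have h1 := h.1
  ext i j
  have h2 := congrFun (congrFun h1 i) j
  simp only [conjTranspose_apply, Matrix.map_apply, star_trivial] at h2
  exact_mod_cast h2

lemma conjTranspose_real {k l : ℕ} (M : Matrix (Fin k) (Fin l) ℝ) : Mᴴ = Mᵀ := by
  ext i j; simp [conjTranspose_apply]

lemma map_mul_intR {k l m : ℕ} (P : Matrix (Fin k) (Fin l) ℤ) (Q : Matrix (Fin l) (Fin m) ℤ) :
    (P * Q).map (Int.cast : ℤ → ℝ) = P.map (Int.cast : ℤ → ℝ) * Q.map (Int.cast : ℤ → ℝ) := by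
  have := Matrix.map_mul (L := P) (M := Q) (f := Int.castRingHom ℝ)
  rwa [Int.coe_castRingHom] at this

lemma psd_congr {X U : Matrix (Fin n) (Fin n) ℤ} (h : IsIntPSD X) :
    IsIntPSD (U * X * Uᵀ) := by
  rw [IsIntPSD, map_mul_intR, map_mul_intR, Matrix.transpose_map, ← conjTranspose_real]
  exact h.mul_mul_conjTranspose_same _

lemma sporadic_congr {X M U : Matrix (Fin n) (Fin n) ℤ} (hU : IsUnit U.det)
    (hX : X = U * M * Uᵀ) (hs : IsSporadicPSD X) : IsSporadicPSD M := by
  rintro ⟨x, hx0, hpsd⟩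
  apply hs
  refine ⟨U *ᵥ x, int_mulVec_ne_zero hU hx0, ?_⟩
  have h1 : X - vecMulVec (U *ᵥ x) (U *ᵥ x) = U * (M - vecMulVec x x) * Uᵀ := by
    rw [hX, ← conj_vecMulVec U x, Matrix.mul_sub, Matrix.sub_mul]
  rw [h1]
  exact psd_congr hpsd

lemma dot_cast (p q : Fin n → ℚ) :
    (fun i => ((p i : ℚ) : ℝ)) ⬝ᵥ (fun i => ((q i : ℚ) : ℝ)) = ((p ⬝ᵥ q : ℚ) : ℝ) := by
  simp [dotProduct]

lemma cast_mulVecQ {k l : ℕ} (M : Matrix (Fin k) (Fin l) ℚ) (x : Fin l → ℚ) :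
    (M.map (Rat.cast : ℚ → ℝ)) *ᵥ (fun i => ((x i : ℚ) : ℝ)) = fun i => (((M *ᵥ x) i : ℚ) : ℝ) := by
  funext i
  exact (RingHom.map_mulVec (Rat.castHom ℝ) M x i).symm

lemma cast_dotQR {k : ℕ} (M : Matrix (Fin k) (Fin k) ℚ) (x y : Fin k → ℚ) :
    (fun i => ((x i : ℚ) : ℝ)) ⬝ᵥ (M.map (Rat.cast : ℚ → ℝ)) *ᵥ (fun i => ((y i : ℚ) : ℝ))
      = ((x ⬝ᵥ M *ᵥ y : ℚ) : ℝ) :=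
  cast_dot (Rat.castHom ℝ) M x y

lemma psd_cast_nonneg {X : Matrix (Fin n) (Fin n) ℤ} (h : IsIntPSD X) (x : Fin n → ℚ) :
    0 ≤ x ⬝ᵥ (X.map (Int.cast : ℤ → ℚ)) *ᵥ x := by
  have h1 := psd_quad_nonneg h (fun i => ((x i : ℚ) : ℝ))
  rw [map_int_eq_comp, cast_dotQR] at h1
  exact_mod_cast h1

lemma posdefQ_of_det_ne {X : Matrix (Fin n) (Fin n) ℤ} (h : IsIntPSD X)
    (hd : (X.map (Int.cast : ℤ → ℚ)).det ≠ 0) : PosDefQ (X.map (Int.cast : ℤ → ℚ)) := by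
  set Q := X.map (Int.cast : ℤ → ℚ) with hQ
  have hQsym : Qᵀ = Q := by
    rw [hQ, ← Matrix.transpose_map, intPSD_symm h]
  intro x hx
  rcases lt_or_eq_of_le (psd_cast_nonneg h x) with hlt | heq
  · exact hlt
  · exfalso
    have hker : Q *ᵥ x = 0 := by
      funext i
      have hbi : ∀ y : Fin n → ℚ, y ⬝ᵥ Q *ᵥ x = 0 := by
        intro y
        by_contra hb
        set b := y ⬝ᵥ Q *ᵥ x with hbdef
        set a := y ⬝ᵥ Q *ᵥ y with hadef
        have hq := psd_cast_nonneg h (y + (-(a + 1)/(2*b)) • x)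
        rw [add_quad, ← hbdef, ← hadef, dot_comm_sym hQsym x y, ← hbdef, ← heq] at hq
        have : a + (-(a + 1)/(2*b)) * b + (-(a + 1)/(2*b)) * b = -1 := by
          field_simp
          ring
        nlinarith [hq, this]
      have := hbi (Pi.single i 1)
      rw [show Pi.single i (1:ℚ) ⬝ᵥ Q *ᵥ x = (Q *ᵥ x) i from by
        simp [dotProduct, Pi.single_apply]] at this
      simpa using this
    exact hd (Matrix.exists_mulVec_eq_zero_iff.mp ⟨x, hx, hker⟩)

end RealSide

section SchurPSD
variable {n : ℕ}

/-- If `xᵀ X⁻¹ x ≤ 1` then `X - x xᵀ` is PSD, for `X` positive definite. -/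
lemma intPSD_sub_vecMulVec {X : Matrix (Fin n) (Fin n) ℤ} (hpsd : IsIntPSD X)
    (hQpos : PosDefQ (X.map (Int.cast : ℤ → ℚ))) (x : Fin n → ℤ) (hx : x ≠ 0)
    (hval : (fun i => (x i : ℚ)) ⬝ᵥ (X.map (Int.cast : ℤ → ℚ))⁻¹ *ᵥ (fun i => (x i : ℚ)) ≤ 1) :
    IsIntPSD (X - vecMulVec x x) := by
  classical
  set Q := X.map (Int.cast : ℤ → ℚ) with hQ
  have hXsym : Xᵀ = X := intPSD_symm hpsd
  have hQsym : Qᵀ = Q := by rw [hQ, ← Matrix.transpose_map, hXsym]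
  have hdet : Q.det ≠ 0 := ne_of_gt (posdef_det_pos Q hQsym hQpos)
  have hdu : IsUnit Q.det := isUnit_iff_ne_zero.mpr hdet
  set xq : Fin n → ℚ := fun i => (x i : ℚ) with hxq
  have hxq0 : xq ≠ 0 := by
    intro hc; exact hx (castvec_eq_zero (Int.castRingHom ℚ) hc)
  set u : Fin n → ℚ := Q⁻¹ *ᵥ xq with hu
  have hQu : Q *ᵥ u = xq := by
    rw [hu, Matrix.mulVec_mulVec, Matrix.mul_nonsing_inv Q hdu, Matrix.one_mulVec]
  set c : ℚ := xq ⬝ᵥ u with hc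
  have hc1 : c ≤ 1 := hval
  have hc0 : 0 < c := (posdef_inv hQsym hQpos).2 xq hxq0
  -- move to the reals
  set R := X.map (Int.cast : ℤ → ℝ) with hR
  have hRQ : R = Q.map (Rat.cast : ℚ → ℝ) := map_int_eq_comp X
  have hRsym : Rᵀ = R := by rw [hR, ← Matrix.transpose_map, hXsym]
  set ur : Fin n → ℝ := fun i => ((u i : ℚ) : ℝ) with hur
  set xr : Fin n → ℝ := fun i => ((x i : ℤ) : ℝ) with hxr
  have hxr_eq : xr = fun i => ((xq i : ℚ) : ℝ) := by
    funext i; rw [hxr, hxq]; push_cast; rfl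
  have hRu : R *ᵥ ur = xr := by
    rw [hRQ, hur, cast_mulVecQ, hQu, hxr_eq]
  have hc_r : ur ⬝ᵥ R *ᵥ ur = (c : ℝ) := by
    rw [hRu, hxr_eq, hur, dot_cast, hc]
    rw [show u ⬝ᵥ xq = xq ⬝ᵥ u from dotProduct_comm u xq]
  refine Matrix.PosSemidef.of_dotProduct_mulVec_nonneg ?_ ?_
  · apply isHermitian_of_symm
    rw [← Matrix.transpose_map]
    rw [show (X - vecMulVec x x)ᵀ = Xᵀ - (vecMulVec x x)ᵀ from Matrix.transpose_sub _ _]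
    rw [hXsym]
    congr 1
    ext i j
    simp [vecMulVec_apply, transpose_apply, mul_comm]
  · intro v
    rw [star_trivial]
    set a : ℝ := v ⬝ᵥ R *ᵥ v with ha
    set b : ℝ := v ⬝ᵥ xr with hb
    have ha0 : 0 ≤ a := psd_quad_nonneg hpsd v
    have hbRu : v ⬝ᵥ R *ᵥ ur = b := by rw [hRu, hb]
    have hbRu' : ur ⬝ᵥ R *ᵥ v = b := by rw [dot_comm_sym hRsym, hbRu]
    have hquad : ∀ tr : ℝ, 0 ≤ (c:ℝ) * (tr * tr) + (2*b) * tr + a := by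
      intro tr
      have h1 := psd_quad_nonneg hpsd (v + tr • ur)
      rw [← hR, add_quad, ← ha, hbRu, hbRu', hc_r] at h1
      nlinarith [h1]
    have hdisc := discrim_le_zero hquad
    rw [discrim] at hdisc
    have hb2 : b^2 ≤ (c:ℝ) * a := by nlinarith [hdisc]
    have hb2a : b^2 ≤ a := by
      have hcr1 : (c : ℝ) ≤ 1 := by exact_mod_cast hc1
      nlinarith [hb2, ha0, hcr1]
    -- compute the quadratic form of the difference
    have hsplit : v ⬝ᵥ ((X - vecMulVec x x).map (Int.cast : ℤ → ℝ)) *ᵥ v = a - b^2 := by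
      have hmap : (X - vecMulVec x x).map (Int.cast : ℤ → ℝ) = R - vecMulVec xr xr := by
        ext i j
        simp only [Matrix.map_apply, Matrix.sub_apply, vecMulVec_apply, hR, hxr]
        push_cast
        ring
      rw [hmap, Matrix.sub_mulVec, dotProduct_sub, ← ha]
      have hvv : v ⬝ᵥ (vecMulVec xr xr) *ᵥ v = b^2 := by
        rw [dot_expand]
        have : ∀ i j, v i * vecMulVec xr xr i j * v j = (v i * xr i) * (xr j * v j) := by
          intro i j; rw [vecMulVec_apply]; ring
        rw [Finset.sum_congr rfl fun i _ => Finset.sum_congr rfl fun j _ => this i j]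
        rw [← Finset.sum_mul_sum]
        have e1 : ∑ i, v i * xr i = b := by rw [hb]; rfl
        have e2 : ∑ j, xr j * v j = b := by
          rw [hb, dotProduct]
          exact Finset.sum_congr rfl fun i _ => mul_comm _ _
        rw [e1, e2, sq]
      rw [hvv]
    rw [hsplit]
    linarith

end SchurPSD

section MoreHelpers
variable {R : Type*} [CommRing R]

lemma conj_inv_eq {k : ℕ} (A X : Matrix (Fin k) (Fin k) R) [Invertible A] :
    ⅟A * (A * X * Aᵀ) * (⅟A)ᵀ = X := by
  have h1 : Aᵀ * (⅟A)ᵀ = 1 := by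
    rw [← Matrix.transpose_mul, invOf_mul_self, Matrix.transpose_one]
  calc ⅟A * (A * X * Aᵀ) * (⅟A)ᵀ = (⅟A * A) * X * (Aᵀ * (⅟A)ᵀ) := by
        simp only [Matrix.mul_assoc]
  _ = X := by rw [invOf_mul_self, h1, Matrix.one_mul, Matrix.mul_one]

lemma isUnit_det_invOf {k : ℕ} (A : Matrix (Fin k) (Fin k) R) [Invertible A] :
    IsUnit (⅟A).det := by
  have h1 : (⅟A).det * A.det = 1 := by
    rw [← Matrix.det_mul, invOf_mul_self, Matrix.det_one]
  exact IsUnit.of_mul_eq_one _ h1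

lemma border_quad {k : ℕ} (B : Matrix (Fin (k+1)) (Fin (k+1)) R)
    (hB0r : ∀ j, B 0 j = 0) (hB0c : ∀ i, B i 0 = 0) (v : Fin (k+1) → R) :
    v ⬝ᵥ B *ᵥ v = (Fin.tail v) ⬝ᵥ (B.submatrix Fin.succ Fin.succ) *ᵥ (Fin.tail v) := by
  conv_lhs => rw [← Fin.cons_self_tail v]
  rw [cons_bilin]
  simp [hB0r, hB0c]

lemma two_single_quad {k : ℕ} (M : Matrix (Fin k) (Fin k) R) (i j : Fin k) (a b : R) :
    (Pi.single i a + Pi.single j b) ⬝ᵥ M *ᵥ (Pi.single i a + Pi.single j b)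
      = a * M i i * a + a * M i j * b + b * M j i * a + b * M j j * b := by
  rw [Matrix.mulVec_add, dotProduct_add, add_dotProduct, add_dotProduct,
    single_bilin, single_bilin, single_bilin, single_bilin]
  ring

end MoreHelpers

/-- Every PSD sporadic integer matrix is unimodularly congruent to one with bounded
entries. -/
theorem sporadic_bound : ∀ (n : ℕ) (X : Matrix (Fin n) (Fin n) ℤ), IsIntPSD X →
    IsSporadicPSD X →
    ∃ U M : Matrix (Fin n) (Fin n) ℤ, IsUnit U.det ∧ M = U * X * Uᵀ ∧
      ∀ i j, |M i j| ≤ 4^(2*n^2) := by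
  intro n
  induction n with
  | zero =>
    intro X _ _
    exact ⟨1, 1 * X * (1:Matrix (Fin 0) (Fin 0) ℤ)ᵀ, by simp, rfl, fun i j => i.elim0⟩
  | succ n ih =>
    intro X hpsd hspor
    have hXsym : Xᵀ = X := intPSD_symm hpsd
    set Q := X.map (Int.cast : ℤ → ℚ) with hQ
    have hQsym : Qᵀ = Q := by rw [hQ, ← Matrix.transpose_map, hXsym]
    by_cases hdet : Q.det = 0
    · -- degenerate case: split off the kernel
      obtain ⟨y, hy0, hyker⟩ := Matrix.exists_mulVec_eq_zero_iff.mpr hdet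
      -- clear denominators
      set d : ℕ := ∏ i, (y i).den with hd
      have hdpos : 0 < d := Finset.prod_pos (fun i _ => (y i).pos)
      have hzd : ∀ i, ∃ z : ℤ, (z:ℚ) = y i * d := by
        intro i
        have h1 : (y i).den ∣ d := Finset.dvd_prod_of_mem _ (Finset.mem_univ i)
        obtain ⟨k, hk⟩ := (Int.natCast_dvd_natCast.mpr h1 : ((y i).den : ℤ) ∣ (d:ℤ))
        refine ⟨(y i).num * k, ?_⟩
        have hk' : (d:ℚ) = ((y i).den:ℚ) * (k:ℚ) := by exact_mod_cast hk
        push_cast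
        rw [hk', ← mul_assoc, Rat.mul_den_eq_num]
      choose v hv using hzd
      have hveq : (fun i => (v i : ℚ)) = (d:ℚ) • y := by
        funext i; rw [hv i]; simp [mul_comm]
      have hv0 : v ≠ 0 := by
        intro hc
        apply hy0
        funext i
        have := congrFun hveq i
        rw [hc] at this
        simp only [Pi.zero_apply, Int.cast_zero, Pi.smul_apply, smul_eq_mul] at this
        have hd0 : (d:ℚ) ≠ 0 := by positivity
        exact ((mul_eq_zero.mp this.symm).resolve_left hd0)
      have hXv : X *ᵥ v = 0 := by
        have h1 : Q *ᵥ (fun i => (v i : ℚ)) = 0 := by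
          rw [hveq, Matrix.mulVec_smul, hyker, smul_zero]
        rw [hQ, cast_mulVec_int] at h1
        funext i
        have := congrFun h1 i
        simpa using this
      obtain ⟨g, w, A, hAdet, hA0, hvgw, hg0⟩ := exists_basis_row v hv0
      have hXw : X *ᵥ w = 0 := by
        have h1 : X *ᵥ v = g • (X *ᵥ w) := by rw [hvgw, Matrix.mulVec_smul]
        rw [hXv] at h1
        rcases smul_eq_zero.mp h1.symm with h | h
        · exact absurd h hg0
        · exact h
      set Y : Matrix (Fin (n+1)) (Fin (n+1)) ℤ := A * X * Aᵀ with hYdef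
      have hY0r : ∀ j, Y 0 j = 0 := by
        intro j
        rw [hYdef, conj_entry, hA0, dot_comm_sym hXsym, hXw, dotProduct_zero]
      have hY0c : ∀ i, Y i 0 = 0 := by
        intro i
        rw [hYdef, conj_entry, hA0, hXw, dotProduct_zero]
      have hYpsd : IsIntPSD Y := psd_congr hpsd
      haveI : Invertible A := A.invertibleOfIsUnitDet hAdet
      have hXYA : X = ⅟A * Y * (⅟A)ᵀ := by rw [hYdef, conj_inv_eq]
      have hYspor : IsSporadicPSD Y := sporadic_congr (isUnit_det_invOf A) hXYA hspor
      set X₁ : Matrix (Fin n) (Fin n) ℤ := Y.submatrix Fin.succ Fin.succ with hX₁def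
      have hYsym : Yᵀ = Y := by
        rw [hYdef, Matrix.transpose_mul, Matrix.transpose_mul, Matrix.transpose_transpose,
          hXsym, Matrix.mul_assoc]
      have hX₁sym : X₁ᵀ = X₁ := by
        ext i j
        rw [transpose_apply, hX₁def, submatrix_apply, submatrix_apply,
          show Y j.succ i.succ = Yᵀ i.succ j.succ from rfl, hYsym]
      have hmapY0r : ∀ j, (Y.map (Int.cast : ℤ → ℝ)) 0 j = 0 := by
        intro j; simp [Matrix.map_apply, hY0r j]
      have hmapY0c : ∀ i, (Y.map (Int.cast : ℤ → ℝ)) i 0 = 0 := by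
        intro i; simp [Matrix.map_apply, hY0c i]
      have hX₁psd : IsIntPSD X₁ := by
        refine Matrix.PosSemidef.of_dotProduct_mulVec_nonneg ?_ ?_
        · apply isHermitian_of_symm
          rw [← Matrix.transpose_map, hX₁sym]
        · intro vv
          rw [star_trivial]
          have h1 := psd_quad_nonneg hYpsd (Fin.cons 0 vv)
          rw [border_quad _ hmapY0r hmapY0c] at h1
          rw [Fin.tail_cons] at h1
          exact h1
      have hX₁spor : IsSporadicPSD X₁ := by
        rintro ⟨x₁, hx10, hx1psd⟩
        apply hYspor
        refine ⟨Fin.cons 0 x₁, cons_ne_zero_of_tail 0 hx10, ?_⟩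
        set yv : Fin (n+1) → ℤ := Fin.cons 0 x₁ with hyv
        have hyv0 : yv 0 = 0 := rfl
        have hM'0r : ∀ j, (Y - vecMulVec yv yv) 0 j = 0 := by
          intro j
          rw [Matrix.sub_apply, vecMulVec_apply, hyv0, hY0r j]
          ring
        have hM'0c : ∀ i, (Y - vecMulVec yv yv) i 0 = 0 := by
          intro i
          rw [Matrix.sub_apply, vecMulVec_apply, hyv0, hY0c i]
          ring
        have hsub : (Y - vecMulVec yv yv).submatrix Fin.succ Fin.succ
            = X₁ - vecMulVec x₁ x₁ := by
          ext i j
          rw [submatrix_apply, Matrix.sub_apply, Matrix.sub_apply, vecMulVec_apply,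
            vecMulVec_apply, hX₁def, submatrix_apply]
          congr 2 <;> simp [hyv]
        refine Matrix.PosSemidef.of_dotProduct_mulVec_nonneg ?_ ?_
        · apply isHermitian_of_symm
          rw [← Matrix.transpose_map]
          congr 1
          rw [Matrix.transpose_sub, hYsym]
          congr 1
          ext i j
          simp [vecMulVec_apply, transpose_apply, mul_comm]
        · intro vv
          rw [star_trivial]
          have hr : ∀ j, ((Y - vecMulVec yv yv).map (Int.cast : ℤ → ℝ)) 0 j = 0 := by
            intro j; simp [Matrix.map_apply, hM'0r j]
          have hc : ∀ i, ((Y - vecMulVec yv yv).map (Int.cast : ℤ → ℝ)) i 0 = 0 := by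
            intro i; simp [Matrix.map_apply, hM'0c i]
          rw [border_quad _ hr hc]
          have hmap : ((Y - vecMulVec yv yv).map (Int.cast : ℤ → ℝ)).submatrix Fin.succ Fin.succ
              = (X₁ - vecMulVec x₁ x₁).map (Int.cast : ℤ → ℝ) := by
            ext i j
            rw [submatrix_apply, Matrix.map_apply, Matrix.map_apply,
              show (Y - vecMulVec yv yv) i.succ j.succ
                = ((Y - vecMulVec yv yv).submatrix Fin.succ Fin.succ) i j from rfl, hsub]
          rw [hmap]
          exact psd_quad_nonneg hx1psd _
      obtain ⟨U₁, M₁, hU₁det, hM₁, hM₁bound⟩ := ih X₁ hX₁psd hX₁spor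
      set U₂ : Matrix (Fin (n+1)) (Fin (n+1)) ℤ := blockL 1 (0 : Fin n → ℤ) U₁ with hU₂
      have hU₂det : IsUnit U₂.det := by rw [hU₂, blockL_det, one_mul]; exact hU₁det
      refine ⟨U₂ * A, U₂ * Y * U₂ᵀ, ?_, ?_, ?_⟩
      · rw [Matrix.det_mul]; exact hU₂det.mul hAdet
      · rw [hYdef, Matrix.transpose_mul]
        simp only [Matrix.mul_assoc]
      · intro i j
        have hbnd : (4:ℤ)^(2*n^2) ≤ 4^(2*(n+1)^2) := by
          apply pow_le_pow_right₀ (by norm_num)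
          have : (n+1)^2 = n^2 + 2*n + 1 := by ring
          omega
        have habs0 : (0:ℤ) ≤ 4^(2*(n+1)^2) := by positivity
        have hrow0 : U₂ 0 = Fin.cons 1 (0 : Fin n → ℤ) := by rw [hU₂, blockL_row_zero]
        have hrows : ∀ i' : Fin n, U₂ i'.succ = Fin.cons 0 (U₁ i') := by
          intro i'; rw [hU₂, blockL_row_succ]; simp
        induction i using Fin.cases with
        | zero =>
          induction j using Fin.cases with
          | zero =>
            rw [conj_entry, hrow0, cons_bilin]
            simp [hY0r]
          | succ j' =>
            rw [conj_entry, hrow0, hrows j', cons_bilin]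
            have h4 : ∀ k : Fin n, Y 0 k.succ = 0 := fun k => hY0r k.succ
            simp [hY0r, h4]
        | succ i' =>
          induction j using Fin.cases with
          | zero =>
            rw [conj_entry, hrow0, hrows i', cons_bilin]
            have h4 : ∀ k : Fin n, Y k.succ 0 = 0 := fun k => hY0c k.succ
            simp [hY0c, h4]
          | succ j' =>
            rw [conj_entry, hrows i', hrows j', cons_bilin]
            have hYs : Y.submatrix Fin.succ Fin.succ = X₁ := rfl
            have h3 : (U₁ i') ⬝ᵥ X₁ *ᵥ (U₁ j') = M₁ i' j' := by
              rw [hM₁, conj_entry]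
            simp only [hYs, h3, zero_mul, mul_zero, zero_add, add_zero]
            calc |M₁ i' j'| ≤ 4^(2*n^2) := hM₁bound i' j'
            _ ≤ 4^(2*(n+1)^2) := hbnd
    · -- positive definite case
      have hQpos : PosDefQ Q := posdefQ_of_det_ne hpsd hdet
      have hQdetpos : 0 < Q.det := posdef_det_pos Q hQsym hQpos
      obtain ⟨hQisym, hQipos⟩ := posdef_inv hQsym hQpos
      have hQidet : Q⁻¹.det = (Q.det)⁻¹ := by
        rw [Matrix.det_nonsing_inv, Ring.inverse_eq_inv']
      -- bound the determinant using sporadicity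
      obtain ⟨U₂, hU₂det, hU₂prod⟩ := reduction (n+1) Q⁻¹ hQisym hQipos
      set D := U₂.map (Int.cast : ℤ → ℚ) * Q⁻¹ * (U₂.map (Int.cast : ℤ → ℚ))ᵀ with hD
      have hDpos : PosDefQ D := posdef_conj hQipos (map_det_ne_zero hU₂det)
      have hdetle : Q.det ≤ 4^((n+1)^2) := by
        by_contra hgt
        push_neg at hgt
        have h1 : ∏ i, D i i < 1 := by
          have h2 : (4:ℚ)^((n+1)^2) * Q⁻¹.det < 1 := by
            rw [hQidet, ← div_eq_mul_inv, div_lt_one hQdetpos]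
            exact hgt
          exact lt_of_le_of_lt hU₂prod h2
        have h3 : ∃ i, D i i < 1 := by
          by_contra hall
          push_neg at hall
          have : (1:ℚ) ≤ ∏ i, D i i := by
            calc (1:ℚ) = ∏ _i : Fin (n+1), (1:ℚ) := by simp
            _ ≤ ∏ i, D i i := Finset.prod_le_prod (fun i _ => zero_le_one) (fun i _ => hall i)
          linarith
        obtain ⟨i, hi⟩ := h3
        have hx0 : U₂ i ≠ 0 := row_ne_zero_of_unit hU₂det i
        have hDval : D i i = (fun k => ((U₂ i k : ℤ) : ℚ)) ⬝ᵥ Q⁻¹ *ᵥ (fun k => ((U₂ i k : ℤ) : ℚ)) := by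
          rw [hD, conj_entry]
          rfl
        apply hspor
        refine ⟨U₂ i, hx0, ?_⟩
        apply intPSD_sub_vecMulVec hpsd hQpos (U₂ i) hx0
        rw [← hQ]
        calc (fun k => ((U₂ i k : ℤ) : ℚ)) ⬝ᵥ Q⁻¹ *ᵥ (fun k => ((U₂ i k : ℤ) : ℚ)) = D i i :=
          hDval.symm
        _ ≤ 1 := hi.le
      -- reduce Q itself
      obtain ⟨U₃, hU₃det, hU₃prod⟩ := reduction (n+1) Q hQsym hQpos
      set M : Matrix (Fin (n+1)) (Fin (n+1)) ℤ := U₃ * X * U₃ᵀ with hM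
      have hMQ : U₃.map (Int.cast : ℤ → ℚ) * Q * (U₃.map (Int.cast : ℤ → ℚ))ᵀ
          = M.map (Int.cast : ℤ → ℚ) := by
        rw [hM, map_mul_int, map_mul_int, hQ, Matrix.transpose_map]
      have hMpos : PosDefQ (M.map (Int.cast : ℤ → ℚ)) := by
        rw [← hMQ]
        exact posdef_conj hQpos (map_det_ne_zero hU₃det)
      have hMsym : Mᵀ = M := by
        rw [hM, Matrix.transpose_mul, Matrix.transpose_mul, Matrix.transpose_transpose, hXsym,
          Matrix.mul_assoc]
      set B : ℤ := 4^(2*(n+1)^2) with hB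
      have hBq : ((B:ℤ):ℚ) = 4^(2*(n+1)^2) := by rw [hB]; push_cast; ring
      have hB0 : (0:ℤ) ≤ B := by positivity
      have hdiag_pos : ∀ i, 0 < M i i := by
        intro i
        have h1 : (0:ℚ) < (M.map (Int.cast : ℤ → ℚ)) i i := posdef_diag hMpos i
        rw [Matrix.map_apply] at h1
        exact_mod_cast h1
      have hdiag_le : ∀ i, (M i i : ℚ) ≤ 4^(2*(n+1)^2) := by
        intro i
        have h1 : ∏ k, (M.map (Int.cast : ℤ → ℚ)) k k ≤ 4^((n+1)^2) * Q.det := by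
          rw [← hMQ]; exact hU₃prod
        have h2 : (4:ℚ)^((n+1)^2) * Q.det ≤ 4^((n+1)^2) * 4^((n+1)^2) := by
          apply mul_le_mul_of_nonneg_left _ (by positivity)
          exact_mod_cast hdetle
        have h3 : (4:ℚ)^((n+1)^2) * 4^((n+1)^2) = 4^(2*(n+1)^2) := by
          rw [← pow_add]
          congr 1
          ring
        have h4 : (M.map (Int.cast : ℤ → ℚ)) i i ≤ ∏ k, (M.map (Int.cast : ℤ → ℚ)) k k := by
          set f : Fin (n+1) → ℚ := fun k => (M.map (Int.cast : ℤ → ℚ)) k k with hf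
          have hf1 : ∀ k, 1 ≤ f k := by
            intro k
            have h5 : 1 ≤ M k k := hdiag_pos k
            rw [hf]
            simp only [Matrix.map_apply]
            exact_mod_cast h5
          rw [← Finset.mul_prod_erase Finset.univ f (Finset.mem_univ i)]
          have h6 : (1:ℚ) ≤ ∏ k ∈ Finset.univ.erase i, f k := by
            calc (1:ℚ) = ∏ _k ∈ Finset.univ.erase i, (1:ℚ) := by simp
            _ ≤ ∏ k ∈ Finset.univ.erase i, f k :=
              Finset.prod_le_prod (fun _ _ => zero_le_one) (fun k _ => hf1 k)
          nlinarith [hf1 i]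
        rw [Matrix.map_apply] at h4
        linarith
      have hdiag_leZ : ∀ i, M i i ≤ B := by
        intro i
        have := hdiag_le i
        rw [← hBq] at this
        exact_mod_cast this
      refine ⟨U₃, M, hU₃det, rfl, ?_⟩
      intro i j
      by_cases hij : i = j
      · subst hij
        rw [abs_of_pos (hdiag_pos i)]
        exact hdiag_leZ i
      · -- off-diagonal entries
        have hMQsym : (M.map (Int.cast : ℤ → ℚ))ᵀ = M.map (Int.cast : ℤ → ℚ) := by
          rw [← Matrix.transpose_map, hMsym]
        have hxne : (Pi.single i ((M j j : ℚ)) + Pi.single j (-(M i j : ℚ))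
            : Fin (n+1) → ℚ) ≠ 0 := by
          intro hzero
          have h6 := congrFun hzero i
          rw [Pi.add_apply, Pi.single_eq_same, Pi.single_eq_of_ne hij, Pi.zero_apply,
            add_zero] at h6
          have h7 : 0 < M j j := hdiag_pos j
          have h8 : M j j = 0 := by exact_mod_cast h6
          omega
        have hq := hMpos _ hxne
        rw [two_single_quad] at hq
        have hMji : (M.map (Int.cast : ℤ → ℚ)) j i = (M.map (Int.cast : ℤ → ℚ)) i j := by
          conv_lhs => rw [← hMQsym, transpose_apply]
        rw [hMji] at hq
        simp only [Matrix.map_apply] at hq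
        have hineq : ((M i j : ℚ))^2 < (M i i : ℚ) * (M j j : ℚ) := by
          have h8 : (0:ℚ) < (M j j : ℚ) := by exact_mod_cast hdiag_pos j
          nlinarith [hq, h8, mul_pos h8 h8]
        have hMiiq : (M i i : ℚ) ≤ 4^(2*(n+1)^2) := hdiag_le i
        have hMjjq : (M j j : ℚ) ≤ 4^(2*(n+1)^2) := hdiag_le j
        have hBqpos : (0:ℚ) < 4^(2*(n+1)^2) := by positivity
        have hMii0 : (0:ℚ) < (M i i : ℚ) := by exact_mod_cast hdiag_pos i
        have hMjj0 : (0:ℚ) < (M j j : ℚ) := by exact_mod_cast hdiag_pos j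
        have hsq : ((M i j : ℚ))^2 ≤ (4^(2*(n+1)^2))^2 := by nlinarith
        have habs : |(M i j : ℚ)| ≤ 4^(2*(n+1)^2) := by
          nlinarith [sq_abs ((M i j : ℚ)), abs_nonneg ((M i j : ℚ)), hBqpos]
        rw [← hBq] at habs
        have : |M i j| ≤ B := by exact_mod_cast habs
        exact this

/-- For every `n ≥ 1` there are finitely many sporadic matrices in
`S^n_+(ℤ)` up to unimodular equivalence `X ↦ U X Uᵀ`, `U ∈ GL(n,ℤ)`. -/
theorem sporadic_psd_finitely_many_unimodular_orbits (n : ℕ) (hn : 1 ≤ n) :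
    ∃ R : Finset (Matrix (Fin n) (Fin n) ℤ),
      (∀ M ∈ R, IsIntPSD M ∧ IsSporadicPSD M) ∧
      ∀ X : Matrix (Fin n) (Fin n) ℤ, IsIntPSD X → IsSporadicPSD X →
        ∃ M ∈ R, ∃ U : Matrix (Fin n) (Fin n) ℤ, IsUnit U.det ∧
          X = U * M * U.transpose := by
  classical
  set C : ℤ := 4^(2*n^2) with hC
  set S : Finset (Matrix (Fin n) (Fin n) ℤ) :=
    (Fintype.piFinset fun _ : Fin n => Fintype.piFinset fun _ : Fin n => Finset.Icc (-C) C).map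
      (Matrix.of (m := Fin n) (n := Fin n) (α := ℤ)).toEmbedding with hS
  refine ⟨S.filter (fun M => IsIntPSD M ∧ IsSporadicPSD M), ?_, ?_⟩
  · intro M hM
    exact (Finset.mem_filter.mp hM).2
  · intro X hX hsp
    obtain ⟨U, M, hUdet, hMeq, hbd⟩ := sporadic_bound n X hX hsp
    haveI : Invertible U := U.invertibleOfIsUnitDet hUdet
    have hXM : X = ⅟U * M * (⅟U)ᵀ := by rw [hMeq]; exact (conj_inv_eq U X).symm
    have hMpsd : IsIntPSD M := by rw [hMeq]; exact psd_congr hX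
    have hMsp : IsSporadicPSD M := sporadic_congr (isUnit_det_invOf U) hXM hsp
    refine ⟨M, ?_, ⅟U, isUnit_det_invOf U, hXM⟩
    rw [Finset.mem_filter]
    refine ⟨?_, hMpsd, hMsp⟩
    rw [hS, Finset.mem_map]
    refine ⟨fun i j => M i j, ?_, rfl⟩
    rw [Fintype.mem_piFinset]
    intro i
    rw [Fintype.mem_piFinset]
    intro j
    rw [Finset.mem_Icc]
    have hij := hbd i j
    rw [← hC] at hij
    exact ⟨neg_le_of_abs_le hij, le_of_abs_le hij⟩
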